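/- Let k be an algebraically closed field of characteristic zero and n ≥ 4. Then the Witt algebra, i.e. the Lie algebra of k-linear derivations of the Laurent polynomial ring k[z, z⁻¹], is a quotient of the Yang–Mills algebra ym(n). Equivalently, there exists a surjective Lie algebra morphism φ from the free Lie algebra over k on generators x_1, …, x_n onto the Lie algebra of derivations of k[z, z⁻¹] such that φ(r_j) = 0 for all j = 1, …, n. -/

import Mathlib

open FreeLieAlgebra

section WittSetup

open LaurentPolynomial

variable (k : Type*) [Field k]

/-- The linear map underlying the Witt algebra element `e_m`. -/
noncomputable def wLin (m : ℤ) : LaurentPolynomial k →ₗ[k] LaurentPolynomial k :=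
  (Finsupp.lsum k fun (j : ℤ) => (j : k) • (AddMonoidAlgebra.lsingle (R := k) (j + m) :
    k →ₗ[k] LaurentPolynomial k)) ∘ₗ (AddMonoidAlgebra.coeffLinearEquiv k).toLinearMap

lemma wLin_single (m j : ℤ) (c : k) :
    wLin k m (AddMonoidAlgebra.single j c) = (j : k) • AddMonoidAlgebra.single (j + m) c := by
  rw [wLin, LinearMap.comp_apply, LinearEquiv.coe_toLinearMap,
    AddMonoidAlgebra.coeffLinearEquiv_apply, AddMonoidAlgebra.coeff_single, Finsupp.lsum_single]
  rfl

lemma wLin_leibniz (m : ℤ) (f g : LaurentPolynomial k) :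
    wLin k m (f * g) = f * wLin k m g + g * wLin k m f := by
  induction f using AddMonoidAlgebra.induction_linear with
  | zero => simp
  | add a b ha hb => simp only [add_mul, map_add, ha, hb]; ring
  | single a ca =>
    induction g using AddMonoidAlgebra.induction_linear with
    | zero => simp
    | add u v hu hv => simp only [mul_add, map_add, hu, hv]; ring
    | single b cb =>
      rw [AddMonoidAlgebra.single_mul_single, wLin_single, wLin_single, wLin_single,
        mul_smul_comm, mul_smul_comm, AddMonoidAlgebra.single_mul_single,
        AddMonoidAlgebra.single_mul_single, AddMonoidAlgebra.smul_single, AddMonoidAlgebra.smul_single,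
        AddMonoidAlgebra.smul_single]
      rw [show a + (b + m) = a + b + m by ring, show b + (a + m) = a + b + m by ring,
        ← AddMonoidAlgebra.single_add]
      congr 1
      simp only [smul_eq_mul]
      push_cast
      ring

/-- The Witt algebra element `e_m` as a derivation of `k[T,T⁻¹]`. -/
noncomputable def Wd (m : ℤ) : Derivation k (LaurentPolynomial k) (LaurentPolynomial k) :=
  Derivation.mk' (wLin k m) (fun a b => by rw [wLin_leibniz, smul_eq_mul, smul_eq_mul])

lemma Wd_single (m j : ℤ) (c : k) :
    Wd k m (AddMonoidAlgebra.single j c) = (j : k) • AddMonoidAlgebra.single (j + m) c := by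
  rw [Wd, Derivation.coe_mk', wLin_single]

lemma derivation_ext {X Y : Derivation k (LaurentPolynomial k) (LaurentPolynomial k)}
    (h : ∀ j c, X (AddMonoidAlgebra.single j c) = Y (AddMonoidAlgebra.single j c)) : X = Y := by
  apply Derivation.ext
  intro a
  induction a using AddMonoidAlgebra.induction_linear with
  | zero => simp
  | add u v hu hv => rw [map_add, map_add, hu, hv]
  | single j c => exact h j c

lemma Wd_bracket (m n : ℤ) :
    ⁅Wd k n, Wd k m⁆ = ((m : k) - n) • Wd k (n + m) := by
  apply derivation_ext
  intro j c
  rw [Derivation.commutator_apply, Wd_single, Derivation.map_smul, Wd_single, Wd_single,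
    Derivation.map_smul, Wd_single, Derivation.smul_apply, Wd_single]
  rw [show j + m + n = j + (n + m) by ring, show j + n + m = j + (n + m) by ring,
    smul_smul, smul_smul, smul_smul, ← sub_smul]
  congr 1
  push_cast
  ring

variable {k}

lemma Xd_C (X : Derivation k (LaurentPolynomial k) (LaurentPolynomial k)) (c : k) :
    X (C c) = 0 := by
  rw [C_eq_algebraMap]; exact Derivation.map_algebraMap X c

lemma Xd_single (X : Derivation k (LaurentPolynomial k) (LaurentPolynomial k)) (j : ℤ) (c : k) :
    X (AddMonoidAlgebra.single j c) = C c * X (T j) := by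
  have h : (AddMonoidAlgebra.single j c : LaurentPolynomial k) = C c * T j := single_eq_C_mul_T c j
  rw [h, Derivation.leibniz, Xd_C, smul_zero, add_zero, smul_eq_mul]

lemma Xd_T (X : Derivation k (LaurentPolynomial k) (LaurentPolynomial k)) (m : ℤ) :
    X (T m) = (m : k) • (T (m - 1) * X (T 1)) := by
  have hneg : X (T (-1)) = -(T (-2) * X (T 1)) := by
    have h1 : (T (-1) : LaurentPolynomial k) * T 1 = 1 := by
      rw [← T_add]; norm_num [T_zero]
    have h2 : ((T (-1) : LaurentPolynomial k)) ^ 2 = T (-2) := by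
      rw [sq, ← T_add]; norm_num
    rw [Derivation.leibniz_of_mul_eq_one (D := X) h1, h2, neg_smul, smul_eq_mul]
  induction m using Int.induction_on with
  | zero => simp [T_zero]
  | succ i ih =>
    have h3 : (T ((i : ℤ) + 1) : LaurentPolynomial k) = T i * T 1 := T_add i 1
    rw [h3, Derivation.leibniz, ih, smul_eq_mul, smul_eq_mul, mul_smul_comm, ← mul_assoc,
      ← T_add, show (1 + ((i : ℤ) - 1)) = (i : ℤ) by ring,
      show ((i : ℤ) + 1 - 1) = (i : ℤ) by ring]
    push_cast
    rw [add_smul, one_smul, add_comm]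
  | pred i ih =>
    have h3 : (T (-(i : ℤ) - 1) : LaurentPolynomial k) = T (-i) * T (-1) := by
      rw [← T_add]; ring_nf
    rw [h3, Derivation.leibniz, ih, hneg, smul_eq_mul, smul_eq_mul, mul_smul_comm, mul_neg,
      ← mul_assoc, ← T_add, ← mul_assoc, ← T_add,
      show (-(i:ℤ) + -2) = (-(i:ℤ) - 1 - 1) by ring,
      show (-1 + (-(i:ℤ) - 1)) = (-(i:ℤ) - 1 - 1) by ring,
      ← neg_one_smul k (T (-(i:ℤ) - 1 - 1) * X (T 1)), ← add_smul]
    congr 1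
    push_cast
    ring

/-- Evaluation of derivations at a point, as an additive monoid homomorphism. -/
noncomputable def evalAdd (x : LaurentPolynomial k) :
    Derivation k (LaurentPolynomial k) (LaurentPolynomial k) →+ LaurentPolynomial k where
  toFun D := D x
  map_zero' := rfl
  map_add' _ _ := rfl

lemma Xd_decomp (X : Derivation k (LaurentPolynomial k) (LaurentPolynomial k)) :
    X = (X (T 1)).coeff.sum fun j cj => cj • Wd k (j - 1) := by
  set f := X (T 1) with hf
  apply derivation_ext
  intro i c
  calc X (AddMonoidAlgebra.single i c) = C c * ((i:k) • (T (i-1) * f)) := by rw [Xd_single, Xd_T]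
    _ = (i:k) • (C c * T (i-1) * f) := by
        rw [mul_smul_comm, mul_assoc]
    _ = f.coeff.sum fun j cj => (cj • Wd k (j-1)) (AddMonoidAlgebra.single i c) := by
        rw [← single_eq_C_mul_T]
        conv_lhs => rw [← AddMonoidAlgebra.sum_coeff_single f]
        rw [Finsupp.mul_sum, Finsupp.smul_sum]
        apply Finsupp.sum_congr
        intro j _
        simp only [AddMonoidAlgebra.single_mul_single,
          Derivation.smul_apply, Wd_single, smul_smul, AddMonoidAlgebra.smul_single, smul_eq_mul]
        rw [show i + (j - 1) = i - 1 + j by ring]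
        congr 1
        ring
    _ = (f.coeff.sum fun j cj => cj • Wd k (j-1)) (AddMonoidAlgebra.single i c) := by
        exact (map_finsuppSum (evalAdd (AddMonoidAlgebra.single i c)) f.coeff
          (fun j cj => cj • Wd k (j - 1))).symm

lemma wd_add_mem [CharZero k]
    {R : LieSubalgebra k (Derivation k (LaurentPolynomial k) (LaurentPolynomial k))}
    {n m : ℤ} (hnm : n ≠ m) (hn : Wd k n ∈ R) (hm : Wd k m ∈ R) : Wd k (n + m) ∈ R := by
  have hc : ((m : k) - n) ≠ 0 := by
    rw [sub_ne_zero]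
    exact fun h => hnm (Int.cast_injective h).symm
  have h1 := R.lie_mem hn hm
  rw [Wd_bracket] at h1
  have h2 := R.smul_mem ((m : k) - n)⁻¹ h1
  rwa [smul_smul, inv_mul_cancel₀ hc, one_smul] at h2

lemma wd_all_mem [CharZero k]
    {R : LieSubalgebra k (Derivation k (LaurentPolynomial k) (LaurentPolynomial k))}
    (h2 : Wd k (-2) ∈ R) (h3 : Wd k 3 ∈ R) : ∀ m : ℤ, Wd k m ∈ R := by
  have h1 : Wd k 1 ∈ R := by
    have := wd_add_mem (n := -2) (m := 3) (by norm_num) h2 h3; norm_num at this; exact this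
  have hm1 : Wd k (-1) ∈ R := by
    have := wd_add_mem (n := -2) (m := 1) (by norm_num) h2 h1; norm_num at this; exact this
  have h0 : Wd k 0 ∈ R := by
    have := wd_add_mem (n := -1) (m := 1) (by norm_num) hm1 h1; norm_num at this; exact this
  have hb2 : Wd k 2 ∈ R := by
    have := wd_add_mem (n := -1) (m := 3) (by norm_num) hm1 h3; norm_num at this; exact this
  have hp : ∀ j : ℕ, 2 ≤ j → Wd k (j : ℤ) ∈ R := by
    intro j hj
    induction j, hj using Nat.le_induction with
    | base => exact_mod_cast hb2
    | succ i hi ih =>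
      have := wd_add_mem (n := 1) (m := (i : ℤ)) (by omega) h1 ih
      rwa [show (1 : ℤ) + (i : ℤ) = ((i + 1 : ℕ) : ℤ) by push_cast; ring] at this
  have hq : ∀ j : ℕ, 2 ≤ j → Wd k (-(j : ℤ)) ∈ R := by
    intro j hj
    induction j, hj using Nat.le_induction with
    | base => exact_mod_cast h2
    | succ i hi ih =>
      have := wd_add_mem (n := -1) (m := -(i : ℤ)) (by omega) hm1 ih
      rwa [show (-1 : ℤ) + -(i : ℤ) = -((i + 1 : ℕ) : ℤ) by push_cast; ring] at this
  intro m
  obtain ⟨j, rfl | rfl⟩ := m.eq_nat_or_neg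
  · match j, hp j with
    | 0, _ => exact_mod_cast h0
    | 1, _ => exact_mod_cast h1
    | (i+2), h => exact h (by omega)
  · match j, hq j with
    | 0, _ => simpa using h0
    | 1, _ => exact_mod_cast hm1
    | (i+2), h => exact h (by omega)

end WittSetup

lemma sum_ym_zero {k W : Type*} [Field k] [LieRing W] [LieAlgebra k W]
    {n : ℕ} (i0 i1 i2 i3 : Fin n) (h01 : i0 ≠ i1) (h02 : i0 ≠ i2) (h03 : i0 ≠ i3)
    (h12 : i1 ≠ i2) (h13 : i1 ≠ i3) (h23 : i2 ≠ i3)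
    (I : k) (hI : I ^ 2 = -1) (a b y : W) (v : Fin n → W)
    (hv : v = fun i => if i = i0 then a else if i = i1 then I • a else if i = i2 then b
      else if i = i3 then I • b else 0) :
    ∑ i : Fin n, ⁅v i, ⁅v i, y⁆⁆ = 0 := by
  have hsq : ∀ x z : W, ⁅I • x, ⁅I • x, z⁆⁆ = -⁅x, ⁅x, z⁆⁆ := by
    intro x z
    rw [smul_lie, smul_lie, lie_smul, smul_smul, ← sq, hI, neg_one_smul]
  have hterm : ∀ i : Fin n, ⁅v i, ⁅v i, y⁆⁆ =
      (if i = i0 then ⁅a, ⁅a, y⁆⁆ else 0) + (if i = i1 then -⁅a, ⁅a, y⁆⁆ else 0)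
      + (if i = i2 then ⁅b, ⁅b, y⁆⁆ else 0) + (if i = i3 then -⁅b, ⁅b, y⁆⁆ else 0) := by
    intro i
    rw [hv]
    simp only []
    split_ifs <;> simp_all [hsq]
  rw [Finset.sum_congr rfl fun i _ => hterm i]
  simp only [Finset.sum_add_distrib, Finset.sum_ite_eq', Finset.mem_univ, if_pos]
  abel

/-- The Yang–Mills relation `r j = ∑ i [xᵢ,[xᵢ,xⱼ]]` in the free Lie algebra on `n`
generators over `k`. -/
noncomputable def ymRel (k : Type*) [Field k] (n : ℕ) (j : Fin n) :
    FreeLieAlgebra k (Fin n) :=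
  ∑ i : Fin n, ⁅of k i, ⁅of k i, of k j⁆⁆

/-- For `n ≥ 4`, the Witt algebra, i.e. the Lie algebra of `k`-linear derivations of the
Laurent polynomial ring `k[z,z⁻¹]`, is a quotient of the Yang–Mills algebra `ym(n)`:
there is a surjective Lie algebra morphism from the free Lie algebra on `n` generators onto
the derivations of `k[z,z⁻¹]` killing all the Yang–Mills relations. -/
theorem witt_quotient_of_yangMills (k : Type*) [Field k] [IsAlgClosed k] [CharZero k]
    (n : ℕ) (hn : 4 ≤ n) :
    ∃ φ : FreeLieAlgebra k (Fin n) →ₗ⁅k⁆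
        Derivation k (LaurentPolynomial k) (LaurentPolynomial k),
      Function.Surjective φ ∧ ∀ j : Fin n, φ (ymRel k n j) = 0 := by
  obtain ⟨I, hI⟩ := IsAlgClosed.exists_pow_nat_eq (-1 : k) (n := 2) (by norm_num)
  set W := Derivation k (LaurentPolynomial k) (LaurentPolynomial k)
  set a : W := Wd k (-2) with ha
  set b : W := Wd k 3 with hb
  set i0 : Fin n := ⟨0, by omega⟩
  set i1 : Fin n := ⟨1, by omega⟩
  set i2 : Fin n := ⟨2, by omega⟩
  set i3 : Fin n := ⟨3, by omega⟩
  have h01 : i0 ≠ i1 := by simp [i0, i1, Fin.ext_iff]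
  have h02 : i0 ≠ i2 := by simp [i0, i2, Fin.ext_iff]
  have h03 : i0 ≠ i3 := by simp [i0, i3, Fin.ext_iff]
  have h12 : i1 ≠ i2 := by simp [i1, i2, Fin.ext_iff]
  have h13 : i1 ≠ i3 := by simp [i1, i3, Fin.ext_iff]
  have h23 : i2 ≠ i3 := by simp [i2, i3, Fin.ext_iff]
  set u : Fin n → W := fun i =>
    if i = i0 then a else if i = i1 then I • a else if i = i2 then b else if i = i3 then I • b
    else 0 with hu
  refine ⟨lift k u, ?_, ?_⟩
  · -- surjectivity
    set R := (lift k u).range with hR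
    have hmema : a ∈ R := by
      rw [hR, LieHom.mem_range]
      exact ⟨of k i0, by rw [lift_of_apply, hu]; simp⟩
    have hmemb : b ∈ R := by
      rw [hR, LieHom.mem_range]
      refine ⟨of k i2, by rw [lift_of_apply, hu]; simp [h02.symm, h12.symm]⟩
    have hall : ∀ m : ℤ, Wd k m ∈ R := wd_all_mem hmema hmemb
    intro X
    have hX : X ∈ R := by
      rw [Xd_decomp X]
      rw [← LieSubalgebra.mem_toSubmodule]
      apply Submodule.finsuppSum_mem
      intro j _
      apply Submodule.smul_mem
      rw [LieSubalgebra.mem_toSubmodule]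
      exact hall (j - 1)
    rwa [hR, LieHom.mem_range] at hX
  · -- relations
    intro j
    have hmap : (lift k u) (ymRel k n j)
        = ∑ i : Fin n, (lift k u) ⁅of k i, ⁅of k i, of k j⁆⁆ := by
      rw [ymRel]
      exact map_sum ((lift k u) : FreeLieAlgebra k (Fin n) →ₗ[k] W) _ _
    have hlie : ∀ i : Fin n,
        (lift k u) ⁅of k i, ⁅of k i, of k j⁆⁆ = ⁅u i, ⁅u i, u j⁆⁆ := fun i => by
      rw [LieHom.map_lie, LieHom.map_lie, lift_of_apply, lift_of_apply]
    rw [hmap, Finset.sum_congr rfl fun i _ => hlie i]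
    exact sum_ym_zero i0 i1 i2 i3 h01 h02 h03 h12 h13 h23 I hI a b (u j) u hu
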